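/- Let x₁, …, x_T ∈ ℝ and for 0 ≤ τ < T define the quadratic C_τ^{(T)}(θ) = Σ_{t=τ+1}^{T} θ·(x_t − θ/2). Let 𝓘 ⊆ {0, …, T−2} be a set of indices such that for all θ, max_{τ ∈ 𝓘} C_τ^{(T−1)}(θ) = max_{τ ∈ {0,…,T−2}} C_τ^{(T−1)}(θ). Then for all θ, max_{τ ∈ 𝓘 ∪ {T−1}} C_τ^{(T)}(θ) = max_{τ ∈ {0,…,T−1}} C_τ^{(T)}(θ). In particular, any set of candidate change locations whose curves realize the pointwise maximum Q_{T−1} continues, after adjoining the single location T−1, to realize the pointwise maximum Q_T. -/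

import Mathlib

open Finset

theorem focus_contributing_set_recursion
    (T : ℕ) (hT : 2 ≤ T) (x : ℕ → ℝ)
    (I : Finset ℕ) (hIne : I.Nonempty) (hIsub : I ⊆ Finset.range (T - 1))
    (hmax : ∀ θ : ℝ,
      I.sup' hIne (fun τ => ∑ t ∈ Finset.Ioc τ (T - 1), θ * (x t - θ / 2))
        = (Finset.range (T - 1)).sup' (Finset.nonempty_range_iff.mpr (by omega))
            (fun τ => ∑ t ∈ Finset.Ioc τ (T - 1), θ * (x t - θ / 2))) :
    ∀ θ : ℝ,
      (insert (T - 1) I).sup' (Finset.insert_nonempty _ _)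
          (fun τ => ∑ t ∈ Finset.Ioc τ T, θ * (x t - θ / 2))
        = (Finset.range T).sup' (Finset.nonempty_range_iff.mpr (by omega))
            (fun τ => ∑ t ∈ Finset.Ioc τ T, θ * (x t - θ / 2)) := by
  intro θ
  set c := θ * (x T - θ / 2) with hc
  have hT1 : T - 1 + 1 = T := by omega
  have hstep : ∀ τ, τ ≤ T - 1 →
      ∑ t ∈ Finset.Ioc τ T, θ * (x t - θ / 2)
        = (∑ t ∈ Finset.Ioc τ (T - 1), θ * (x t - θ / 2)) + c := by
    intro τ hτ
    rw [← hT1, Finset.sum_Ioc_succ_top hτ, hT1]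
  have hL : I.sup' hIne (fun τ => ∑ t ∈ Finset.Ioc τ T, θ * (x t - θ / 2))
      = I.sup' hIne (fun τ => ∑ t ∈ Finset.Ioc τ (T - 1), θ * (x t - θ / 2)) + c := by
    rw [Finset.sup'_add]
    apply Finset.sup'_congr hIne rfl
    intro τ hτ
    have := hIsub hτ
    rw [Finset.mem_range] at this
    exact hstep τ (by omega)
  have hR : (Finset.range (T-1)).sup' (Finset.nonempty_range_iff.mpr (by omega))
        (fun τ => ∑ t ∈ Finset.Ioc τ T, θ * (x t - θ / 2))
      = (Finset.range (T-1)).sup' (Finset.nonempty_range_iff.mpr (by omega))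
        (fun τ => ∑ t ∈ Finset.Ioc τ (T - 1), θ * (x t - θ / 2)) + c := by
    rw [Finset.sup'_add]
    apply Finset.sup'_congr _ rfl
    intro τ hτ
    rw [Finset.mem_range] at hτ
    exact hstep τ (by omega)
  have hrange : Finset.range T = insert (T-1) (Finset.range (T-1)) := by
    conv_lhs => rw [← hT1]
    exact Finset.range_add_one
  rw [Finset.sup'_congr (Finset.nonempty_range_iff.mpr (by omega : T ≠ 0)) hrange
      (fun a _ => rfl) (g := fun τ => ∑ t ∈ Finset.Ioc τ T, θ * (x t - θ / 2)),
    Finset.sup'_insert (H := hIne),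
    Finset.sup'_insert (H := Finset.nonempty_range_iff.mpr (by omega : T - 1 ≠ 0)), hL, hR, hmax θ]
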